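/- Recurrence for the Gauss sum: Let n ≥ 2 be an integer and let q be a complex number such that q^j ≠ 1 for every integer j with 1 ≤ j ≤ n. Setting F_n(q) = ∑_{k=0}^n (−1)^k / ((q;q)_k · (q;q)_{n−k}), one has F_n(q) = F_{n−2}(q) / (1 − q^n). -/

import Mathlib

noncomputable def qPoch (q a : ℂ) (k : ℕ) : ℂ := ∏ i ∈ Finset.range k, (1 - a * q ^ i)

lemma qPoch_succ (q : ℂ) (k : ℕ) : qPoch q q (k+1) = qPoch q q k * (1 - q ^ (k+1)) := by
  simp only [qPoch, Finset.prod_range_succ]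
  ring

lemma qPoch_ne_zero {n : ℕ} {q : ℂ} (hq : ∀ j : ℕ, 1 ≤ j → j ≤ n → q ^ j ≠ 1)
    {j : ℕ} (hj : j ≤ n) : qPoch q q j ≠ 0 := by
  unfold qPoch
  rw [Finset.prod_ne_zero_iff]
  intro i hi
  rw [Finset.mem_range] at hi
  intro h
  exact hq (i+1) (by omega) (by omega)
    (by rw [pow_succ']; exact (sub_eq_zero.mp h).symm)

/-- Shift lemma: `∑_{k=0}^m (-1)^k (1-q^k)/(P_k P_{m-k}) = -∑_{k=0}^{m-1} (-1)^k/(P_k P_{m-1-k})`. -/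
lemma shift_sum {n : ℕ} {q : ℂ} (hq : ∀ j : ℕ, 1 ≤ j → j ≤ n → q ^ j ≠ 1)
    {m : ℕ} (hm : m ≤ n) :
    ∑ k ∈ Finset.range (m+1), (-1 : ℂ) ^ k * (1 - q ^ k) / (qPoch q q k * qPoch q q (m - k)) =
      - ∑ k ∈ Finset.range m, (-1 : ℂ) ^ k / (qPoch q q k * qPoch q q (m - 1 - k)) := by
  rw [Finset.sum_range_succ']
  simp only [pow_zero, sub_self, mul_zero, zero_mul, zero_div, add_zero]
  rw [← Finset.sum_neg_distrib]
  apply Finset.sum_congr rfl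
  intro k hk
  rw [Finset.mem_range] at hk
  have h1 : qPoch q q (k+1) = qPoch q q k * (1 - q ^ (k+1)) := qPoch_succ q k
  have h2 : m - (k+1) = m - 1 - k := by omega
  have hP1 : qPoch q q k ≠ 0 := qPoch_ne_zero hq (by omega)
  have hP2 : qPoch q q (m - 1 - k) ≠ 0 := qPoch_ne_zero hq (by omega)
  have hf : (1 : ℂ) - q ^ (k+1) ≠ 0 := by
    intro h
    exact hq (k+1) (by omega) (by omega) (sub_eq_zero.mp h).symm
  rw [h1, h2]
  field_simp
  ring

theorem gauss_recurrence (n : ℕ) (hn : 2 ≤ n) (q : ℂ)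
    (hq : ∀ j : ℕ, 1 ≤ j → j ≤ n → q ^ j ≠ 1) :
    ∑ k ∈ Finset.range (n + 1), (-1 : ℂ) ^ k / (qPoch q q k * qPoch q q (n - k)) =
      (∑ k ∈ Finset.range (n - 2 + 1),
        (-1 : ℂ) ^ k / (qPoch q q k * qPoch q q (n - 2 - k))) / (1 - q ^ n) := by
  have h1q : (1 : ℂ) - q ^ n ≠ 0 := by
    intro h
    exact hq n (by omega) le_rfl (sub_eq_zero.mp h).symm
  rw [eq_div_iff h1q, Finset.sum_mul]
  -- Step 1: split each term
  have step1 : ∀ k ∈ Finset.range (n+1),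
      (-1 : ℂ) ^ k / (qPoch q q k * qPoch q q (n - k)) * (1 - q ^ n) =
        (-1 : ℂ) ^ k * (1 - q ^ k) / (qPoch q q k * qPoch q q (n - k)) +
        (-1 : ℂ) ^ k * q ^ k * (1 - q ^ (n - k)) / (qPoch q q k * qPoch q q (n - k)) := by
    intro k hk
    rw [Finset.mem_range] at hk
    have hqn : q ^ n = q ^ k * q ^ (n - k) := by
      rw [← pow_add]; congr 1; omega
    have hP1 : qPoch q q k ≠ 0 := qPoch_ne_zero hq (by omega)
    have hP2 : qPoch q q (n - k) ≠ 0 := qPoch_ne_zero hq (by omega)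
    rw [hqn]
    field_simp
    ring
  rw [Finset.sum_congr rfl step1, Finset.sum_add_distrib]
  -- first sum via shift_sum
  rw [shift_sum hq le_rfl]
  -- second sum: last term vanishes, then reduce
  have step2 : ∑ k ∈ Finset.range (n+1),
      (-1 : ℂ) ^ k * q ^ k * (1 - q ^ (n - k)) / (qPoch q q k * qPoch q q (n - k)) =
      ∑ k ∈ Finset.range n, (-1 : ℂ) ^ k * q ^ k / (qPoch q q k * qPoch q q (n - 1 - k)) := by
    rw [Finset.sum_range_succ]
    simp only [Nat.sub_self, pow_zero, sub_self, mul_zero, zero_div, add_zero]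
    apply Finset.sum_congr rfl
    intro k hk
    rw [Finset.mem_range] at hk
    have h2 : n - k = (n - 1 - k) + 1 := by omega
    have h1 : qPoch q q (n - k) = qPoch q q (n - 1 - k) * (1 - q ^ (n - k)) := by
      rw [h2, qPoch_succ, ← h2]
    have hP1 : qPoch q q k ≠ 0 := qPoch_ne_zero hq (by omega)
    have hP2 : qPoch q q (n - 1 - k) ≠ 0 := qPoch_ne_zero hq (by omega)
    have hf : (1 : ℂ) - q ^ (n - k) ≠ 0 := by
      intro h
      exact hq (n - k) (by omega) (by omega) (sub_eq_zero.mp h).symm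
    rw [h1]
    field_simp
  rw [step2]
  -- now combine: -∑ (-1)^k/(..) + ∑ (-1)^k q^k/(..) = -∑ (-1)^k(1-q^k)/(..)
  have step3 : (- ∑ k ∈ Finset.range n, (-1 : ℂ) ^ k / (qPoch q q k * qPoch q q (n - 1 - k))) +
      ∑ k ∈ Finset.range n, (-1 : ℂ) ^ k * q ^ k / (qPoch q q k * qPoch q q (n - 1 - k)) =
      - ∑ k ∈ Finset.range n, (-1 : ℂ) ^ k * (1 - q ^ k) / (qPoch q q k * qPoch q q (n - 1 - k)) := by
    rw [← Finset.sum_neg_distrib, ← Finset.sum_add_distrib, ← Finset.sum_neg_distrib]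
    apply Finset.sum_congr rfl
    intro k _
    ring
  rw [step3]
  have key := shift_sum hq (show n - 1 ≤ n by omega)
  rw [show n - 1 + 1 = n from by omega] at key
  rw [show n - 1 - 1 = n - 2 from by omega] at key
  rw [show n - 1 = n - 2 + 1 from by omega] at key ⊢
  rw [key, neg_neg]
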